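/- Let A be an arbitrary acceptance set in an ordered topological vector space X and S a traded asset. If S_T belongs to the core (algebraic interior) of X_+, then ρ_{A,S} is finitely valued on all of X. -/

import Mathlib

open Filter Topology

variable {X : Type*} [AddCommGroup X] [Module ℝ X] [PartialOrder X]
  [CovariantClass X X (· + ·) (· ≤ ·)] [PosSMulMono ℝ X]
  [TopologicalSpace X] [IsTopologicalAddGroup X] [ContinuousSMul ℝ X]

/-- The risk measure `ρ_{A,S}(x) = inf {m : x + (m/S₀)·S_T ∈ A}`, valued in `EReal`
(with `inf ∅ = ⊤` and unbounded-below giving `⊥`). -/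
noncomputable def rho (A : Set X) (S0 : ℝ) (ST : X) (x : X) : EReal :=
  sInf ((fun r : ℝ => (r : EReal)) '' {r : ℝ | x + (r / S0) • ST ∈ A})

/-- A set is monotone if it contains, with any element, every larger element. -/
def MonotoneSet (A : Set X) : Prop := ∀ x ∈ A, ∀ y, x ≤ y → y ∈ A

/-- An acceptance set: nonempty, proper, and monotone. -/
def AcceptanceSet (A : Set X) : Prop := A.Nonempty ∧ A ≠ Set.univ ∧ MonotoneSet A

/-- The algebraic core (algebraic interior) of a set. -/
def algCore (A : Set X) : Set X :=
  {x | ∀ y : X, ∃ ε > 0, ∀ l : ℝ, |l| < ε → x + l • y ∈ A}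

/-- if S_T is in the core of the positive cone, ρ_{A,S} is finitely
valued on all of X. -/
theorem rho_finite_of_core (A : Set X) (S0 : ℝ) (ST : X)
    (hA : AcceptanceSet A) (hS0 : 0 < S0) (hST : 0 ≤ ST) (hSTne : ST ≠ 0)
    (hcore : ST ∈ algCore {x : X | 0 ≤ x}) :
    ∀ x : X, rho A S0 ST x ≠ ⊤ ∧ rho A S0 ST x ≠ ⊥ := by
  obtain ⟨⟨a, ha⟩, hne, hmono⟩ := hA
  intro x
  constructor
  · -- not ⊤ : the defining set is nonempty
    obtain ⟨ε, hε, h⟩ := hcore (x - a)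
    set l := ε / 2 with hl
    have hlpos : 0 < l := by positivity
    have h1 : (0 : X) ≤ ST + l • (x - a) := h l (by rw [abs_of_pos hlpos]; linarith)
    have h2 : (0 : X) ≤ (1 / l) • (ST + l • (x - a)) :=
      smul_nonneg (by positivity) h1
    have h3 : (1 / l) • (ST + l • (x - a)) = (1 / l) • ST + (x - a) := by
      rw [smul_add, smul_smul, one_div_mul_cancel hlpos.ne', one_smul]
    have h4 : a ≤ x + (1 / l) • ST := by
      rw [← sub_nonneg]
      have heq : x + (1 / l) • ST - a = (1 / l) • ST + (x - a) := by abel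
      rw [heq, ← h3]; exact h2
    have hdiv : S0 / l / S0 = 1 / l := by field_simp
    have hm : x + (S0 / l / S0) • ST ∈ A := by
      rw [hdiv]
      exact hmono a ha _ h4
    have hle : rho A S0 ST x ≤ ((S0 / l : ℝ) : EReal) :=
      sInf_le ⟨S0 / l, hm, rfl⟩
    exact (lt_of_le_of_lt hle (EReal.coe_lt_top _)).ne
  · -- not ⊥ : the defining set is bounded below
    obtain ⟨b, hb⟩ := Set.ne_univ_iff_exists_notMem A |>.mp hne
    obtain ⟨ε, hε, h⟩ := hcore (b - x)
    set l := ε / 2 with hl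
    have hlpos : 0 < l := by positivity
    have h1 : (0 : X) ≤ ST + l • (b - x) := h l (by rw [abs_of_pos hlpos]; linarith)
    have h2 : (0 : X) ≤ (1 / l) • (ST + l • (b - x)) :=
      smul_nonneg (by positivity) h1
    have h3 : (1 / l) • (ST + l • (b - x)) = (1 / l) • ST + (b - x) := by
      rw [smul_add, smul_smul, one_div_mul_cancel hlpos.ne', one_smul]
    have k1 : (0 : X) ≤ (1 / l) • ST + (b - x) := h3 ▸ h2
    have hlb : ((-(S0 / l) : ℝ) : EReal) ≤ rho A S0 ST x := by
      apply le_sInf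
      rintro _ ⟨r, hr, rfl⟩
      rw [EReal.coe_le_coe_iff]
      by_contra hcon
      push_neg at hcon
      have hr' : r / S0 < -(1 / l) := by
        rw [div_lt_iff₀ hS0]
        have : -(1 / l) * S0 = -(S0 / l) := by ring
        rw [this]; exact hcon
      have k2 : (0 : X) ≤ (-(1 / l) - r / S0) • ST :=
        smul_nonneg (by linarith) hST
      have hble : x + (r / S0) • ST ≤ b := by
        rw [← sub_nonneg]
        have heq : b - (x + (r / S0) • ST)
            = ((1 / l) • ST + (b - x)) + (-(1 / l) - r / S0) • ST := by
          rw [sub_smul, neg_smul]; abel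
        rw [heq]
        exact add_nonneg k1 k2
      exact hb (hmono _ hr b hble)
    exact (lt_of_lt_of_le (EReal.bot_lt_coe _) hlb).ne'
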